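/- Let R be a torsion-free commutative unital ring that is finitely generated as an abelian group. Then every non-zero-divisor of R is invertible in ℚ ⊗ R; i.e., the total fraction ring of R is ℚ ⊗ R. -/

import Mathlib

open scoped TensorProduct

/-- If a commutative ring `R` is torsion-free and finitely generated as an abelian group,
then every non-zero-divisor of `R` becomes invertible in `ℚ ⊗ R`; that is, the total
fraction ring of `R` is `ℚ ⊗ R`. -/
theorem fraction_ring_of_fg_torsionfree (R : Type*) [CommRing R]
    (htf : ∀ (n : ℕ) (r : R), 0 < n → n • r = 0 → r = 0)
    [Module.Finite ℤ R]
    (r : R) (hr : r ∈ nonZeroDivisors R) :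
    IsUnit ((1 : ℚ) ⊗ₜ[ℤ] r : ℚ ⊗[ℤ] R) := by
  set t : ℚ ⊗[ℤ] R := (1 : ℚ) ⊗ₜ[ℤ] r with ht
  have h1 : Function.Injective (LinearMap.mulRight ℤ r) := by
    intro a b hab
    have : (a - b) * r = 0 := by
      simp only [LinearMap.mulRight_apply] at hab
      rw [sub_mul, hab, sub_self]
    have := (mem_nonZeroDivisors_iff.mp hr).2 _ this
    exact sub_eq_zero.mp this
  haveI : Module.Flat ℤ ℚ := IsLocalization.flat ℚ (nonZeroDivisors ℤ)
  have h2 : Function.Injective (LinearMap.lTensor ℚ (LinearMap.mulRight ℤ r)) :=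
    Module.Flat.lTensor_preserves_injective_linearMap _ h1
  have heq : ⇑(LinearMap.mulRight ℚ t) = ⇑(LinearMap.lTensor ℚ (LinearMap.mulRight ℤ r)) := by
    funext x
    induction x using TensorProduct.induction_on with
    | zero => simp
    | tmul q s =>
      simp [ht, Algebra.TensorProduct.tmul_mul_tmul]
    | add a b ha hb =>
      simp only [map_add, LinearMap.mulRight_apply, add_mul] at *
      rw [ha, hb]
  have hinj : Function.Injective (LinearMap.mulRight ℚ t) := by rw [heq]; exact h2
  have hsurj : Function.Surjective (LinearMap.mulRight ℚ t) :=
    (LinearMap.injective_iff_surjective).mp hinj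
  obtain ⟨x, hx⟩ := hsurj 1
  exact IsUnit.of_mul_eq_one (a := t) x (by rw [mul_comm]; exact hx)
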